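/- Let θ ∈ ℂ and let u, y, z : ℂ → ℂ be holomorphic with u(t) ≠ 0 for all t. Define A(λ,t) = λ²·[[1,0],[0,−1]] + λ·[[0, u],[−2z/u, 0]] + [[z + t/2, −u·y],[−2(y·z+θ)/u, −z − t/2]] and U(λ,t) = (λ/2)·[[1,0],[0,−1]] + (1/2)·[[0, u],[−2z/u, 0]]. Then the zero-curvature equation ∂A/∂t − ∂U/∂λ + A·U − U·A = 0 holds for all (λ,t) ∈ ℂ² if and only if u′ = −y·u, y′ = y² + z + t/2, and z′ = −2y·z − θ hold for all t ∈ ℂ. -/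
import Mathlib


open Matrix Complex

noncomputable section

/-- The `λ`-coefficient matrix of the Jimbo–Miwa pair `JM₂` with parameter `θ`. -/
def A₄ (θ : ℂ) (u y z : ℂ → ℂ) (l t : ℂ) : Matrix (Fin 2) (Fin 2) ℂ :=
  l^2 • (!![1,0; 0,-1] : Matrix (Fin 2) (Fin 2) ℂ) +
    l • !![0, u t; -2*z t/u t, 0] +
    !![z t + t/2, -(u t)*(y t); -2*(y t*z t + θ)/u t, -(z t) - t/2]

/-- The `t`-coefficient matrix of the Jimbo–Miwa pair `JM₂`. -/
def U₄ (u z : ℂ → ℂ) (l t : ℂ) : Matrix (Fin 2) (Fin 2) ℂ :=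
  (l/2) • (!![1,0; 0,-1] : Matrix (Fin 2) (Fin 2) ℂ) +
    (1/2 : ℂ) • !![0, u t; -2*z t/u t, 0]

variable {θ l t : ℂ} {u y z : ℂ → ℂ}

lemma dA00 (hz : Differentiable ℂ z) :
    deriv (fun s => A₄ θ u y z l s 0 0) t = deriv z t + 1/2 := by
  have h : (fun s => A₄ θ u y z l s 0 0) = fun s => l^2 + (z s + s/2) := by
    funext s; simp [A₄]
  rw [h]
  exact (((hz t).hasDerivAt.add (((hasDerivAt_id t).div_const 2))).const_add (l^2)).deriv

lemma dA01 (hu : Differentiable ℂ u) (hy : Differentiable ℂ y) :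
    deriv (fun s => A₄ θ u y z l s 0 1) t
      = l * deriv u t - (deriv u t * y t + u t * deriv y t) := by
  have h : (fun s => A₄ θ u y z l s 0 1) = fun s => l * u s - u s * y s := by
    funext s; simp [A₄]; ring
  rw [h]
  exact (((hu t).hasDerivAt.const_mul l).sub ((hu t).hasDerivAt.mul (hy t).hasDerivAt)).deriv

lemma dA10 (hu : Differentiable ℂ u) (hy : Differentiable ℂ y) (hz : Differentiable ℂ z)
    (hu0 : ∀ t : ℂ, u t ≠ 0) :
    deriv (fun s => A₄ θ u y z l s 1 0) t
      = l * ((-2 * deriv z t * u t - (-2 * z t) * deriv u t) / u t ^ 2)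
        + ((-2 * (deriv y t * z t + y t * deriv z t)) * u t - (-2 * (y t * z t + θ)) * deriv u t) / u t ^ 2 := by
  have h : (fun s => A₄ θ u y z l s 1 0)
      = fun s => l * (-2 * z s / u s) + (-2 * (y s * z s + θ) / u s) := by
    funext s; simp [A₄]
  rw [h]
  have h1 : HasDerivAt (fun s => -2 * z s / u s)
      ((-2 * deriv z t * u t - (-2 * z t) * deriv u t) / u t ^ 2) t :=
    ((hz t).hasDerivAt.const_mul (-2)).div (hu t).hasDerivAt (hu0 t)
  have h2 : HasDerivAt (fun s => -2 * (y s * z s + θ) / u s)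
      (((-2 * (deriv y t * z t + y t * deriv z t)) * u t - (-2 * (y t * z t + θ)) * deriv u t) / u t ^ 2) t :=
    ((((hy t).hasDerivAt.mul (hz t).hasDerivAt).add_const θ).const_mul (-2)).div (hu t).hasDerivAt (hu0 t)
  exact ((h1.const_mul l).add h2).deriv

lemma dA11 (hz : Differentiable ℂ z) :
    deriv (fun s => A₄ θ u y z l s 1 1) t = -deriv z t - 1/2 := by
  have h : (fun s => A₄ θ u y z l s 1 1) = fun s => -(l^2) + (-(z s) - s/2) := by
    funext s; simp [A₄]
  rw [h]
  exact (((hz t).hasDerivAt.neg.sub ((hasDerivAt_id t).div_const 2)).const_add (-(l^2))).deriv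

lemma dU00 : deriv (fun w => U₄ u z w t 0 0) l = 1/2 := by
  have h : (fun w => U₄ u z w t 0 0) = fun w => w/2 := by funext w; simp [U₄]
  rw [h]; exact ((hasDerivAt_id l).div_const 2).deriv

lemma dU01 : deriv (fun w => U₄ u z w t 0 1) l = 0 := by
  have h : (fun w => U₄ u z w t 0 1) = fun _ => u t / 2 := by funext w; simp [U₄]; ring
  rw [h]; exact deriv_const l _

lemma dU10 : deriv (fun w => U₄ u z w t 1 0) l = 0 := by
  have h : (fun w => U₄ u z w t 1 0) = fun _ => -(z t) / u t := by funext w; simp [U₄]; ring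
  rw [h]; exact deriv_const l _

lemma dU11 : deriv (fun w => U₄ u z w t 1 1) l = -(1/2) := by
  have h : (fun w => U₄ u z w t 1 1) = fun w => -(w/2) := by funext w; simp [U₄]
  rw [h]; exact ((hasDerivAt_id l).div_const 2).neg.deriv

lemma key (hu : Differentiable ℂ u) (hy : Differentiable ℂ y) (hz : Differentiable ℂ z)
    (hu0 : ∀ t : ℂ, u t ≠ 0) (l t : ℂ) :
    (Matrix.of fun i j => deriv (fun s => A₄ θ u y z l s i j) t)
        - (Matrix.of fun i j => deriv (fun w => U₄ u z w t i j) l)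
        + A₄ θ u y z l t * U₄ u z l t - U₄ u z l t * A₄ θ u y z l t
    = !![deriv z t + 2 * y t * z t + θ,
         l * (deriv u t + u t * y t) - (deriv u t * y t + u t * deriv y t) + (z t + t/2) * u t;
         l * ((-2 * deriv z t * u t + 2 * z t * deriv u t) / u t ^ 2 - 2 * (y t * z t + θ) / u t)
           + ((-2 * (deriv y t * z t + y t * deriv z t) * u t + 2 * (y t * z t + θ) * deriv u t) / u t ^ 2
              + 2 * z t * (z t + t/2) / u t),
         -(deriv z t + 2 * y t * z t + θ)] := by
  have e00 := dA00 (θ := θ) (l := l) (t := t) (u := u) (y := y) hz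
  have e01 := dA01 (θ := θ) (l := l) (t := t) (z := z) hu hy
  have e10 := dA10 (θ := θ) (l := l) (t := t) hu hy hz hu0
  have e11 := dA11 (θ := θ) (l := l) (t := t) (u := u) (y := y) hz
  have f00 := dU00 (u := u) (z := z) (l := l) (t := t)
  have f01 := dU01 (u := u) (z := z) (l := l) (t := t)
  have f10 := dU10 (u := u) (z := z) (l := l) (t := t)
  have f11 := dU11 (u := u) (z := z) (l := l) (t := t)
  ext i j
  fin_cases i <;> fin_cases j <;>
    simp only [Fin.mk_zero, Fin.mk_one] <;>
    simp only [Matrix.sub_apply, Matrix.add_apply, Matrix.mul_apply, Fin.sum_univ_two,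
      Matrix.of_apply, Fin.isValue, e00, e01, e10, e11, f00, f01, f10, f11] <;>
    simp [A₄, U₄]
  · linear_combination (2 * y t * z t + θ) * mul_inv_cancel₀ (hu0 t)
  · ring
  · ring
  · linear_combination (-(2 * y t * z t + θ)) * mul_inv_cancel₀ (hu0 t)

/-- The zero-curvature equation for the Jimbo–Miwa pair `JM₂` holds identically in
`(λ,t)` iff `u' = −yu`, `y' = y² + z + t/2` and `z' = −2yz − θ`. -/
theorem stmt_4 (θ : ℂ) (u y z : ℂ → ℂ)
    (hu : Differentiable ℂ u) (hy : Differentiable ℂ y) (hz : Differentiable ℂ z)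
    (hu0 : ∀ t : ℂ, u t ≠ 0) :
    (∀ l t : ℂ,
      (Matrix.of fun i j => deriv (fun s => A₄ θ u y z l s i j) t)
        - (Matrix.of fun i j => deriv (fun w => U₄ u z w t i j) l)
        + A₄ θ u y z l t * U₄ u z l t - U₄ u z l t * A₄ θ u y z l t = 0)
    ↔ (∀ t : ℂ, deriv u t = -(y t) * u t ∧ deriv y t = (y t)^2 + z t + t/2 ∧
        deriv z t = -2*(y t)*(z t) - θ) := by
  constructor
  · intro h t
    have k0 := (key (θ := θ) hu hy hz hu0 0 t).symm.trans (h 0 t)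
    have k1 := (key (θ := θ) hu hy hz hu0 1 t).symm.trans (h 1 t)
    have a00 := Matrix.ext_iff.2 k0 0 0
    have a01 := Matrix.ext_iff.2 k0 0 1
    have b01 := Matrix.ext_iff.2 k1 0 1
    simp only [Matrix.cons_val', Matrix.cons_val_zero, Matrix.cons_val_one, Matrix.head_cons,
      Matrix.empty_val', Matrix.cons_val_fin_one, Matrix.zero_apply, Matrix.of_apply,
      Fin.isValue] at a00 a01 b01
    have hdu : deriv u t = -(y t) * u t := by linear_combination b01 - a01
    refine ⟨hdu, ?_, by linear_combination a00⟩
    have hne : u t ≠ 0 := hu0 t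
    have hm : u t * (deriv y t - ((y t)^2 + z t + t/2)) = 0 := by
      linear_combination (-1 : ℂ) * a01 + (-(y t)) * hdu
    have h5 := (mul_eq_zero.mp hm).resolve_left hne
    linear_combination h5
  · intro h l t
    obtain ⟨h1, h2, h3⟩ := h t
    rw [key (θ := θ) hu hy hz hu0 l t]
    ext i j
    fin_cases i <;> fin_cases j <;> simp [h1, h2, h3]
    · ring
    · ring
    · linear_combination ((2*l*(y t*z t+θ) - 2*(z t)^2 - t*z t)*(u t)⁻¹) *
        mul_inv_cancel₀ (hu0 t)
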